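/- Let X be a Banach space and suppose there is a constant C > 0 such that for all n and all x* ∈ X*, Σ_{m=1}^∞ p_{n,m}|x*(x_m)| ≤ C‖x*‖, where for each n the weights p_{n,m} are supported on an interval (m₁(n), m₂(n)) with Σ_m p_{n,m} = 1. If X has M-cotype p with constant C₁, then for every n, 1 ≤ (C/C₁)·(Σ_{m=m₁(n)+1}^{m₂(n)} ‖x_m‖^{-p′})^{1/p′}, where p′ is the dual exponent of p. -/

import Mathlib

open Filter Topology

theorem stmt13 {X : Type*} [NormedAddCommGroup X] [NormedSpace ℝ X]
    (p p' : ℝ) (hp : 2 ≤ p) (hconj : 1 / p + 1 / p' = 1)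
    (x : ℕ → X) (hx0 : ∀ m, x m ≠ 0)
    (P : ℕ → ℕ → ℝ) (m₁ m₂ : ℕ → ℕ)
    (hP0 : ∀ n m, 0 ≤ P n m)
    (hPsupp : ∀ n m, m ∉ Finset.Ioc (m₁ n) (m₂ n) → P n m = 0)
    (hPsum : ∀ n, ∑ m ∈ Finset.Ioc (m₁ n) (m₂ n), P n m = 1)
    (C : ℝ) (hC : 0 < C)
    (hbound : ∀ (n : ℕ) (f : X →L[ℝ] ℝ),
      ∑ m ∈ Finset.Ioc (m₁ n) (m₂ n), P n m * |f (x m)| ≤ C * ‖f‖)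
    (C₁ : ℝ) (hC₁ : 0 < C₁)
    (hcot : ∀ (k : ℕ) (y : Fin k → X), ∃ γ : Fin k → ℝ,
      (∀ i, γ i = 1 ∨ γ i = -1) ∧
      C₁ * (∑ i, ‖y i‖ ^ p) ^ (1 / p) ≤ ‖∑ i, γ i • y i‖) :
    ∀ n, 1 ≤ (C / C₁) *
      (∑ m ∈ Finset.Ioc (m₁ n) (m₂ n), ‖x m‖ ^ (-p')) ^ (1 / p') := by
  intro n
  set S := Finset.Ioc (m₁ n) (m₂ n) with hS
  have hp1 : 1 < p := by linarith
  have hpq : p.HolderConjugate p' := Real.holderConjugate_iff.2 ⟨hp1, by simpa [one_div] using hconj⟩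
  set e : Fin S.card ≃ {m // m ∈ S} := S.equivFin.symm with he
  set y : Fin S.card → X := fun i => P n (e i) • x (e i) with hy
  obtain ⟨γ, hγ1, hγ⟩ := hcot S.card y
  obtain ⟨g, hg1, hgv⟩ := exists_dual_vector'' ℝ (∑ i, γ i • y i)
  have hgv' : g (∑ i, γ i • y i) = ‖∑ i, γ i • y i‖ := by exact_mod_cast hgv
  have hnormle : ‖∑ i, γ i • y i‖ ≤ C := by
    rw [← hgv']
    calc g (∑ i, γ i • y i) = ∑ i, γ i * (P n (e i) * g (x (e i))) := by
          simp [map_sum, hy, smul_smul, map_smul, mul_assoc]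
      _ ≤ ∑ i, P n (e i) * |g (x (e i))| := by
          apply Finset.sum_le_sum
          intro i _
          refine le_trans (le_abs_self _) ?_
          rw [abs_mul, abs_mul, abs_of_nonneg (hP0 n _)]
          rcases hγ1 i with h | h <;> rw [h] <;> simp
      _ = ∑ m ∈ S, P n m * |g (x m)| := by
          rw [← Finset.sum_coe_sort S (fun m => P n m * |g (x m)|)]
          exact Equiv.sum_comp e (fun m : {m // m ∈ S} => P n m * |g (x m)|)
      _ ≤ C * ‖g‖ := hbound n g
      _ ≤ C := by nlinarith
  have hA : C₁ * (∑ m ∈ S, (P n m * ‖x m‖) ^ p) ^ (1 / p) ≤ C := by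
    have hsum : ∑ i, ‖y i‖ ^ p = ∑ m ∈ S, (P n m * ‖x m‖) ^ p := by
      rw [← Finset.sum_coe_sort S (fun m => (P n m * ‖x m‖) ^ p),
        ← Equiv.sum_comp e (fun m : {m // m ∈ S} => (P n m * ‖x m‖) ^ p)]
      refine Finset.sum_congr rfl fun i _ => ?_
      rw [hy]
      simp [norm_smul, Real.norm_eq_abs, abs_of_nonneg (hP0 n _)]
    calc C₁ * (∑ m ∈ S, (P n m * ‖x m‖) ^ p) ^ (1 / p)
        = C₁ * (∑ i, ‖y i‖ ^ p) ^ (1 / p) := by rw [hsum]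
      _ ≤ ‖∑ i, γ i • y i‖ := hγ
      _ ≤ C := hnormle
  have hBnn : (0:ℝ) ≤ (∑ m ∈ S, ‖x m‖ ^ (-p')) ^ (1 / p') :=
    Real.rpow_nonneg (Finset.sum_nonneg fun m _ => Real.rpow_nonneg (norm_nonneg _) _) _
  have hHolder : (1:ℝ) ≤ (∑ m ∈ S, (P n m * ‖x m‖) ^ p) ^ (1 / p) *
      (∑ m ∈ S, ‖x m‖ ^ (-p')) ^ (1 / p') := by
    have h1 : (1:ℝ) = ∑ m ∈ S, (P n m * ‖x m‖) * ‖x m‖⁻¹ := by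
      rw [← hPsum n]
      refine Finset.sum_congr rfl fun m _ => ?_
      field_simp [norm_ne_zero_iff.2 (hx0 m)]
    have h2 : ∑ m ∈ S, ‖x m‖ ^ (-p') = ∑ m ∈ S, (‖x m‖⁻¹) ^ p' := by
      refine Finset.sum_congr rfl fun m _ => ?_
      rw [Real.inv_rpow (norm_nonneg _), ← Real.rpow_neg (norm_nonneg _)]
    rw [h2]
    calc (1:ℝ) = ∑ m ∈ S, (P n m * ‖x m‖) * ‖x m‖⁻¹ := h1
      _ ≤ _ := Real.inner_le_Lp_mul_Lq_of_nonneg S hpq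
          (fun m _ => mul_nonneg (hP0 n m) (norm_nonneg _))
          (fun m _ => inv_nonneg.2 (norm_nonneg _))
  have hAle : (∑ m ∈ S, (P n m * ‖x m‖) ^ p) ^ (1 / p) ≤ C / C₁ :=
    (le_div_iff₀' hC₁).2 hA
  calc (1:ℝ) ≤ (∑ m ∈ S, (P n m * ‖x m‖) ^ p) ^ (1 / p) *
      (∑ m ∈ S, ‖x m‖ ^ (-p')) ^ (1 / p') := hHolder
    _ ≤ (C / C₁) * (∑ m ∈ S, ‖x m‖ ^ (-p')) ^ (1 / p') :=
      mul_le_mul_of_nonneg_right hAle hBnn
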